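/- Suppose n > 3t, F ⊆ Π with |F| ≤ t, and at least n - t distinct processes sent binary value b in round r. Then every set of n - t distinct processes that each sent some value in round r contains at least one non-faulty process that sent b. -/
import Mathlib


theorem quorum_witness {α : Type*} [DecidableEq α] (P F : Finset α) (n t : ℕ)
    (sent : α → Bool → Prop) (b : Bool)
    (hn : P.card = n) (ht : 3 * t < n)
    (hF : F ⊆ P) (hFcard : F.card ≤ t)
    (hnonfaulty : ∀ p ∈ P, p ∉ F → ∀ b₀ b₁ : Bool, sent p b₀ → sent p b₁ → b₀ = b₁)
    (hquorum : ∃ A ⊆ P, n - t ≤ A.card ∧ ∀ p ∈ A, sent p b) :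
    ∀ B ⊆ P, n - t ≤ B.card → (∀ p ∈ B, ∃ w : Bool, sent p w) →
      ∃ p ∈ B, p ∉ F ∧ sent p b := by
  intro B hB hBcard _
  obtain ⟨A, hA, hAcard, hAsent⟩ := hquorum
  have hunion : (A ∪ B).card ≤ n := hn ▸ Finset.card_le_card (Finset.union_subset hA hB)
  have hiu : (A ∩ B).card + (A ∪ B).card = A.card + B.card :=
    Finset.card_inter_add_card_union A B
  have hAn : A.card ≤ n := hn ▸ Finset.card_le_card hA
  have hlt : F.card < (A ∩ B).card := by omega
  have hns : ¬ (A ∩ B) ⊆ F := fun h => absurd (Finset.card_le_card h) (by omega)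
  obtain ⟨p, hpAB, hpF⟩ := Finset.not_subset.mp hns
  exact ⟨p, Finset.mem_of_mem_inter_right hpAB, hpF, hAsent p (Finset.mem_of_mem_inter_left hpAB)⟩
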